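/- For the process Y_n = 1_C(T^n ω) constructed from the binary odometer, the scaled cumulant limit along n_i = 2^{i-1} satisfies lim_{i→∞} (1/n_i) log E[exp(θ Σ_{j=0}^{n_i-1} Y_j)] = θ for every θ > 0; hence the set {θ : λ(θ) - θ·1 < 0} is empty for s = 1, where λ(θ) = limsup_n (1/n) log E[exp(θ Σ_{i=1}^n Y_i)]. -/

import Mathlib

open MeasureTheory Filter

noncomputable def binDigit (i : ℕ) (r : ℝ) : ℤ := ⌊r * 2 ^ i⌋ % 2

noncomputable def binTau (r : ℝ) : ℕ := sInf {i | 0 < i ∧ binDigit i r = 1}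

/-- The binary odometer `T r = r - 2^{-τ(r)} + ∑_{l=1}^{τ(r)-1} 2^{-l}`. -/
noncomputable def TOdo (r : ℝ) : ℝ :=
  r - (2 : ℝ)⁻¹ ^ binTau r + ∑ l ∈ Finset.Icc 1 (binTau r - 1), (2 : ℝ)⁻¹ ^ l

/-- `Jset i j = [0,1) ∩ T^{-j} [0, 2^{-(2i+1)})`, i.e. the part of the `j`-th
preimage of `I_0^{2i+1}` inside the unit interval. -/
noncomputable def Jset (i j : ℕ) : Set ℝ :=
  Set.Ico (0 : ℝ) 1 ∩ (TOdo^[j] ⁻¹' Set.Ico (0 : ℝ) ((2 : ℝ)⁻¹ ^ (2 * i + 1)))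

/-- `A_0 = ∅`, and for `i ≥ 1`, `A_i = ⋃_{j=0}^{2^{i-1}-1} T^{-j} [0, 2^{-2i-1})`. -/
noncomputable def Aset : ℕ → Set ℝ
  | 0 => ∅
  | i + 1 => ⋃ j ∈ Finset.range (2 ^ i), Jset (i + 1) j

/-- `B_0 = [0, 1/4)`, and for `i ≥ 1`, `B_i = ⋃_{j=2^{i-1}}^{2^i-1} T^{-j} [0, 2^{-2i-1})`. -/
noncomputable def Bset : ℕ → Set ℝ
  | 0 => Set.Ico (0 : ℝ) (1 / 4)
  | i + 1 => ⋃ j ∈ Finset.Ico (2 ^ i) (2 ^ (i + 1)), Jset (i + 1) j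

/-- `C_i = A_i ∪ B_i`. -/
noncomputable def Cset (i : ℕ) : Set ℝ := Aset i ∪ Bset i

/-- `C = ⋃_{i ≥ 0} C_i`. -/
noncomputable def CsetAll : Set ℝ := ⋃ i, Cset i

namespace Stmt18Aux

lemma sum_inv_pow (n : ℕ) : ∑ l ∈ Finset.Icc 1 n, ((2:ℝ)⁻¹)^l = 1 - (2:ℝ)⁻¹^n := by
  induction n with
  | zero => simp
  | succ n ih =>
    rw [Finset.sum_Icc_succ_top (by omega), ih, pow_succ]
    ring

lemma inv_pow_pred {t : ℕ} (ht : 1 ≤ t) : (2:ℝ)⁻¹ ^ (t-1) = 2 * (2:ℝ)⁻¹ ^ t := by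
  have h : (2:ℝ)⁻¹ ^ t = (2:ℝ)⁻¹^(t-1) * 2⁻¹ := by
    rw [← pow_succ]; congr 1; omega
  rw [h]; ring

lemma binTau_eq {t : ℕ} (ht : 1 ≤ t) {r : ℝ} (h1 : (2:ℝ)⁻¹ ^ t ≤ r)
    (h2 : r < 2 * (2:ℝ)⁻¹ ^ t) : binTau r = t := by
  have h2t : (0:ℝ) < 2 ^ t := by positivity
  have hinv : ((2:ℝ)⁻¹)^t = ((2:ℝ)^t)⁻¹ := by rw [inv_pow]
  have hdt : binDigit t r = 1 := by
    have hfl : ⌊r * 2 ^ t⌋ = 1 := by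
      rw [Int.floor_eq_iff]
      constructor
      · have := mul_le_mul_of_nonneg_right h1 h2t.le
        rw [hinv, inv_mul_cancel₀ h2t.ne'] at this
        simpa using this
      · have := mul_lt_mul_of_pos_right h2 h2t
        rw [mul_assoc, hinv, inv_mul_cancel₀ h2t.ne', mul_one] at this
        norm_num at this ⊢
        linarith
    unfold binDigit
    rw [hfl]
    decide
  have hdig0 : ∀ s, 0 < s → s < t → binDigit s r = 0 := by
    intro s hs hst
    have h2s : (0:ℝ) < 2 ^ s := by positivity
    have hfl : ⌊r * 2 ^ s⌋ = 0 := by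
      rw [Int.floor_eq_iff]
      constructor
      · simp only [Int.cast_zero]
        have hr0 : 0 ≤ r := le_trans (by positivity) h1
        positivity
      · have hrlt : r < (2:ℝ)⁻¹ ^ s := by
          calc r < 2 * (2:ℝ)⁻¹^t := h2
          _ = (2:ℝ)⁻¹ ^ (t-1) := (inv_pow_pred ht).symm
          _ ≤ (2:ℝ)⁻¹ ^ s := by
              apply pow_le_pow_of_le_one (by norm_num) (by norm_num) (by omega)
        have := mul_lt_mul_of_pos_right hrlt h2s
        rw [inv_pow, inv_mul_cancel₀ h2s.ne'] at this
        simpa using this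
    unfold binDigit
    rw [hfl]
    decide
  have htS : t ∈ {i | 0 < i ∧ binDigit i r = 1} := ⟨ht, hdt⟩
  unfold binTau
  have hle : sInf {i | 0 < i ∧ binDigit i r = 1} ≤ t := Nat.sInf_le htS
  have hmem := Nat.sInf_mem ⟨t, htS⟩
  rcases lt_or_eq_of_le hle with h | h
  · exact absurd hmem.2 (by rw [hdig0 _ hmem.1 h]; decide)
  · exact h

lemma TOdo_eq {t : ℕ} (ht : 1 ≤ t) {r : ℝ} (h1 : (2:ℝ)⁻¹ ^ t ≤ r)
    (h2 : r < 2 * (2:ℝ)⁻¹ ^ t) : TOdo r = r + 1 - 3 * (2:ℝ)⁻¹ ^ t := by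
  unfold TOdo
  rw [binTau_eq ht h1 h2, sum_inv_pow, inv_pow_pred ht]
  ring


def rev : ℕ → ℕ → ℕ
  | 0, _ => 0
  | m+1, b => b % 2 * 2^m + rev m (b/2)

lemma rev_le (m b : ℕ) : rev m b + 1 ≤ 2^m := by
  induction m generalizing b with
  | zero => simp [rev]
  | succ m ih =>
    have h2 : b % 2 ≤ 1 := by omega
    have h3 : b % 2 * 2^m ≤ 2^m := by
      calc b % 2 * 2^m ≤ 1 * 2^m := Nat.mul_le_mul_right _ h2
      _ = 2^m := one_mul _
    have h4 := ih (b/2)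
    have h5 : (2:ℕ)^(m+1) = 2^m + 2^m := by rw [pow_succ]; omega
    show b % 2 * 2^m + rev m (b/2) + 1 ≤ 2^(m+1)
    omega

lemma rev_zero (m : ℕ) : rev m 0 = 0 := by
  induction m with
  | zero => rfl
  | succ m ih => show 0 % 2 * 2^m + rev m (0/2) = 0; simp [ih]

lemma rev_spec : ∀ m b, 0 < b → b < 2^m →
    ∃ v, v < m ∧ 2^(m-1-v) ≤ rev m b ∧ rev m b + 1 ≤ 2^(m-v) ∧
      rev m (b-1) + 3 * 2^(m-1-v) = rev m b + 2^m := by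
  intro m
  induction m with
  | zero => intro b hb hbm; simp at hbm; omega
  | succ m ih =>
    intro b hb hbm
    rcases Nat.mod_two_eq_zero_or_one b with he | ho
    · -- even case
      set q := b / 2 with hq
      have hb2 : b = 2 * q := by omega
      have hq0 : 0 < q := by omega
      have hqm : q < 2^m := by rw [pow_succ] at hbm; omega
      obtain ⟨v, hv, h1, h2, h3⟩ := ih q hq0 hqm
      refine ⟨v+1, by omega, ?_, ?_, ?_⟩
      · have e : m + 1 - 1 - (v+1) = m - 1 - v := by omega
        rw [e]
        show 2^(m-1-v) ≤ b % 2 * 2^m + rev m (b/2)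
        rw [he, ← hq]
        omega
      · have e : m + 1 - (v+1) = m - v := by omega
        rw [e]
        show b % 2 * 2^m + rev m (b/2) + 1 ≤ 2^(m-v)
        rw [he, ← hq]
        omega
      · have e : m + 1 - 1 - (v+1) = m - 1 - v := by omega
        rw [e]
        have hb1 : b - 1 = 2*(q-1) + 1 := by omega
        show (b-1) % 2 * 2^m + rev m ((b-1)/2) + 3 * 2^(m-1-v)
            = (b % 2 * 2^m + rev m (b/2)) + 2^(m+1)
        have e1 : (b-1) % 2 = 1 := by omega
        have e2 : (b-1) / 2 = q - 1 := by omega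
        rw [e1, e2, he, ← hq, pow_succ]
        omega
    · -- odd case
      refine ⟨0, by omega, ?_, ?_, ?_⟩
      · have e : m + 1 - 1 - 0 = m := by omega
        rw [e]
        show 2^m ≤ b % 2 * 2^m + rev m (b/2)
        rw [ho]; omega
      · have e : m + 1 - 0 = m + 1 := by omega
        rw [e]
        exact rev_le (m+1) b
      · have e : m + 1 - 1 - 0 = m := by omega
        rw [e]
        show (b-1) % 2 * 2^m + rev m ((b-1)/2) + 3 * 2^m
            = (b % 2 * 2^m + rev m (b/2)) + 2^(m+1)
        have e1 : (b-1) % 2 = 0 := by omega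
        have e2 : (b-1) / 2 = b / 2 := by omega
        rw [e1, e2, ho, pow_succ]
        omega

def cyl (m b : ℕ) : Set ℝ := Set.Ico ((rev m b : ℝ)/2^m) (((rev m b : ℝ)+1)/2^m)

lemma cyl_subset_Ico (m b : ℕ) : cyl m b ⊆ Set.Ico 0 1 := by
  intro x hx
  have h2m : (0:ℝ) < 2^m := by positivity
  have hle : ((rev m b : ℝ) + 1) ≤ 2^m := by
    have := rev_le m b
    exact_mod_cast (by exact_mod_cast this : ((rev m b + 1 : ℕ) : ℝ) ≤ ((2^m : ℕ) : ℝ))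
  constructor
  · exact le_trans (by positivity) hx.1
  · exact lt_of_lt_of_le hx.2 (by rw [div_le_one h2m]; exact hle)

lemma step {m b : ℕ} (hb : 0 < b) (hbm : b < 2^m) {ω : ℝ} (hω : ω ∈ cyl m b) :
    TOdo ω ∈ cyl m (b-1) := by
  obtain ⟨v, hvm, h1, h2, h3⟩ := rev_spec m b hb hbm
  have h2m : (0:ℝ) < 2^m := by positivity
  have hm : (m-1-v) + (v+1) = m := by omega
  have hsplit : (2:ℝ)^m = 2^(m-1-v) * 2^(v+1) := by
    rw [← pow_add, hm]
  have h2v1 : (0:ℝ) < 2^(v+1) := by positivity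
  have e1 : ((2:ℝ)⁻¹)^(v+1) = 2^(m-1-v) / 2^m := by
    rw [inv_pow, hsplit, eq_div_iff (by positivity)]
    field_simp
  have h1' : (2:ℝ)⁻¹^(v+1) ≤ ω := by
    rw [e1]
    refine le_trans ?_ hω.1
    gcongr
    exact_mod_cast h1
  have h2' : ω < 2 * (2:ℝ)⁻¹^(v+1) := by
    have hmv : m - v = (m-1-v) + 1 := by omega
    have : ((rev m b : ℝ) + 1) / 2^m ≤ 2 * (2:ℝ)⁻¹^(v+1) := by
      rw [e1]
      rw [div_le_iff₀ h2m, mul_assoc, div_mul_cancel₀ _ h2m.ne']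
      have : ((rev m b : ℝ) + 1) ≤ 2^(m-v) := by exact_mod_cast h2
      calc ((rev m b : ℝ) + 1) ≤ 2^(m-v) := this
      _ = 2 * 2^(m-1-v) := by rw [hmv, pow_succ]; ring
    exact lt_of_lt_of_le hω.2 this
  have hT := TOdo_eq (Nat.le_add_left 1 v) h1' h2'
  have hkey : ((rev m (b-1) : ℝ))/2^m = (rev m b : ℝ)/2^m + 1 - 3 * (2:ℝ)⁻¹^(v+1) := by
    have h3' : (rev m (b-1) : ℝ) + 3 * 2^(m-1-v) = (rev m b : ℝ) + 2^m := by
      exact_mod_cast h3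
    rw [e1]
    field_simp
    linarith
  constructor
  · rw [hT, hkey]
    have := hω.1
    linarith
  · rw [hT]
    have hkey2 : ((rev m (b-1) : ℝ) + 1)/2^m = ((rev m b : ℝ)+1)/2^m + 1 - 3 * (2:ℝ)⁻¹^(v+1) := by
      field_simp at hkey ⊢
      linarith
    rw [hkey2]
    linarith [hω.2]

lemma orbit {m b : ℕ} (hbm : b < 2^m) {ω : ℝ} (hω : ω ∈ cyl m b) :
    ∀ k, k ≤ b → TOdo^[k] ω ∈ cyl m (b - k) := by
  intro k
  induction k with
  | zero => intro _; simpa using hω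
  | succ k ih =>
    intro hk
    have h1 := ih (by omega)
    have hbk : 0 < b - k := by omega
    have hbk2 : b - k < 2^m := lt_of_le_of_lt (Nat.sub_le _ _) hbm
    have := step hbk hbk2 h1
    rw [Function.iterate_succ_apply']
    have e : b - (k+1) = (b - k) - 1 := by omega
    rw [e]
    exact this


lemma crux {i b₀ k : ℕ} (hk : k ≤ b₀) (hidx : b₀ - k < 2^i)
    (hm : b₀ < 2^(2*i+3)) {ω : ℝ} (hω : ω ∈ cyl (2*i+3) b₀) :
    TOdo^[k] ω ∈ CsetAll := by
  have h1 := orbit hm hω k hk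
  have h2 := orbit hm hω b₀ le_rfl
  have hmem : TOdo^[k] ω ∈ Jset (i+1) (b₀ - k) := by
    constructor
    · exact cyl_subset_Ico _ _ h1
    · show TOdo^[b₀-k] (TOdo^[k] ω) ∈ Set.Ico (0:ℝ) ((2:ℝ)⁻¹ ^ (2*(i+1)+1))
      rw [← Function.iterate_add_apply, Nat.sub_add_cancel hk]
      simp only [Nat.sub_self] at h2
      have e : 2*(i+1)+1 = 2*i+3 := by ring
      rw [e]
      rcases h2 with ⟨ha, hb⟩
      rw [rev_zero] at ha hb
      push_cast at ha hb
      constructor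
      · simpa using ha
      · rw [inv_pow]
        have e2 : ((2:ℝ)^(2*i+3))⁻¹ = ((0:ℝ)+1)/2^(2*i+3) := by rw [zero_add, one_div]
        rw [e2]
        exact hb
  have : TOdo^[k] ω ∈ Aset (i+1) := by
    show TOdo^[k] ω ∈ ⋃ j ∈ Finset.range (2 ^ i), Jset (i + 1) j
    refine Set.mem_biUnion ?_ hmem
    exact Finset.mem_coe.mpr (Finset.mem_range.mpr hidx)
  exact Set.mem_iUnion.mpr ⟨i+1, Or.inl this⟩


lemma measurable_binDigit (i : ℕ) : Measurable (binDigit i) := by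
  unfold binDigit
  exact (Measurable.of_discrete (f := fun z : ℤ => z % 2)).comp
    ((Int.measurable_floor).comp (measurable_id.mul_const ((2:ℝ)^i)))

lemma measurable_binTau : Measurable binTau := by
  apply measurable_to_countable'
  intro t
  have hD : ∀ s : ℕ, MeasurableSet {r : ℝ | binDigit s r = 1} :=
    fun s => (measurable_binDigit s) (measurableSet_singleton 1)
  rcases Nat.eq_zero_or_pos t with rfl | ht
  · have : binTau ⁻¹' {0} = ⋂ (s : ℕ), {r : ℝ | ¬(0 < s ∧ binDigit s r = 1)} := by
      ext r
      simp only [Set.mem_preimage, Set.mem_singleton_iff, Set.mem_iInter, Set.mem_setOf_eq]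
      constructor
      · intro h s hs
        have := Nat.sInf_eq_zero.mp h
        rcases this with h0 | hempty
        · exact absurd h0.1 (lt_irrefl 0)
        · have : s ∈ {i | 0 < i ∧ binDigit i r = 1} := hs
          rw [hempty] at this
          exact this
      · intro h
        apply Nat.sInf_eq_zero.mpr
        right
        ext s
        simp only [Set.mem_setOf_eq, Set.mem_empty_iff_false, iff_false]
        exact h s
    rw [this]
    apply MeasurableSet.iInter
    intro s
    have : {r : ℝ | ¬(0 < s ∧ binDigit s r = 1)} = ({r : ℝ | binDigit s r = 1})ᶜ ∪ {r : ℝ | ¬ 0 < s} := by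
      ext r; by_cases h : 0 < s <;> simp [h]
    rw [this]
    apply MeasurableSet.union (hD s).compl
    by_cases h : 0 < s <;> simp [h]
  · have : binTau ⁻¹' {t} =
        ({r : ℝ | binDigit t r = 1} ∩ ⋂ s ∈ Finset.Ioo 0 t, ({r : ℝ | binDigit s r = 1})ᶜ) := by
      ext r
      simp only [Set.mem_preimage, Set.mem_singleton_iff, Set.mem_inter_iff, Set.mem_setOf_eq,
        Set.mem_iInter, Set.mem_compl_iff, Finset.mem_Ioo]
      constructor
      · intro h
        have hne : {i | 0 < i ∧ binDigit i r = 1}.Nonempty := by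
          by_contra hc
          rw [Set.not_nonempty_iff_eq_empty] at hc
          unfold binTau at h
          rw [hc, Nat.sInf_empty] at h
          omega
        have hmem := Nat.sInf_mem hne
        unfold binTau at h
        rw [h] at hmem
        refine ⟨hmem.2, ?_⟩
        intro s hs hds
        have : sInf {i | 0 < i ∧ binDigit i r = 1} ≤ s := Nat.sInf_le ⟨hs.1, hds⟩
        rw [h] at this
        omega
      · intro ⟨h1, h2⟩
        have hmem : t ∈ {i | 0 < i ∧ binDigit i r = 1} := ⟨ht, h1⟩
        show binTau r = t
        unfold binTau
        apply le_antisymm (Nat.sInf_le hmem)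
        by_contra hlt
        push_neg at hlt
        have hin := Nat.sInf_mem (Set.nonempty_of_mem hmem)
        exact absurd hin.2 (h2 _ ⟨hin.1, hlt⟩)
    rw [this]
    exact (hD t).inter (MeasurableSet.biInter (Finset.Ioo 0 t).countable_toSet
      (fun s _ => (hD s).compl))
  

lemma measurable_TOdo : Measurable TOdo := by
  unfold TOdo
  apply Measurable.add
  · exact Measurable.sub measurable_id
      ((Measurable.of_discrete (f := fun n : ℕ => (2:ℝ)⁻¹ ^ n)).comp measurable_binTau)
  · exact (Measurable.of_discrete
      (f := fun n : ℕ => ∑ l ∈ Finset.Icc 1 (n-1), (2:ℝ)⁻¹^l)).comp measurable_binTau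

lemma measurableSet_Jset (i j : ℕ) : MeasurableSet (Jset i j) :=
  measurableSet_Ico.inter ((measurable_TOdo.iterate j) measurableSet_Ico)

lemma measurableSet_CsetAll : MeasurableSet CsetAll := by
  apply MeasurableSet.iUnion
  intro i
  apply MeasurableSet.union
  · cases i with
    | zero => exact MeasurableSet.empty
    | succ i =>
        show MeasurableSet (⋃ j ∈ Finset.range (2 ^ i), Jset (i + 1) j)
        exact Finset.measurableSet_biUnion _ (fun j _ => measurableSet_Jset (i+1) j)
  · cases i with
    | zero => exact measurableSet_Ico
    | succ i =>
        show MeasurableSet (⋃ j ∈ Finset.Ico (2 ^ i) (2 ^ (i + 1)), Jset (i + 1) j)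
        exact Finset.measurableSet_biUnion _ (fun j _ => measurableSet_Jset (i+1) j)

noncomputable def mu0 : Measure ℝ := volume.restrict (Set.Ico (0:ℝ) 1)

instance : IsProbabilityMeasure mu0 := by
  constructor
  rw [mu0, Measure.restrict_apply_univ, Real.volume_Ico]
  norm_num

section YLemmas

variable {Y : ℕ → ℝ → ℝ}
  (hY : ∀ n ω, Y n ω = Set.indicator CsetAll (fun _ => (1 : ℝ)) (TOdo^[n] ω))

include hY

lemma Y_nonneg (n : ℕ) (ω : ℝ) : 0 ≤ Y n ω := by
  rw [hY]; exact Set.indicator_nonneg (fun _ _ => zero_le_one) _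

lemma Y_le_one (n : ℕ) (ω : ℝ) : Y n ω ≤ 1 := by
  rw [hY]
  exact Set.indicator_apply_le' (fun _ => le_refl 1) (fun _ => zero_le_one)

lemma measurable_Y (n : ℕ) : Measurable (Y n) := by
  have h : Y n = fun ω => Set.indicator CsetAll (fun _ => (1:ℝ)) (TOdo^[n] ω) :=
    funext (hY n)
  rw [h]
  exact (measurable_const.indicator measurableSet_CsetAll).comp (measurable_TOdo.iterate n)

lemma sum_Y_le (F : Finset ℕ) (ω : ℝ) : ∑ k ∈ F, Y k ω ≤ (F.card : ℝ) := by
  calc ∑ k ∈ F, Y k ω ≤ ∑ k ∈ F, 1 := Finset.sum_le_sum (fun k _ => Y_le_one hY k ω)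
  _ = (F.card : ℝ) := by simp

lemma sum_Y_nonneg (F : Finset ℕ) (ω : ℝ) : 0 ≤ ∑ k ∈ F, Y k ω :=
  Finset.sum_nonneg (fun k _ => Y_nonneg hY k ω)

lemma measurable_exp_sum (θ : ℝ) (F : Finset ℕ) :
    Measurable (fun ω => Real.exp (θ * ∑ k ∈ F, Y k ω)) := by
  apply Measurable.exp
  exact (Finset.measurable_sum F (fun k _ => measurable_Y hY k)).const_mul θ

lemma integrable_exp_sum (θ : ℝ) (F : Finset ℕ) :
    Integrable (fun ω => Real.exp (θ * ∑ k ∈ F, Y k ω)) mu0 := by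
  refine Integrable.mono' (integrable_const (Real.exp (|θ| * F.card)))
    (measurable_exp_sum hY θ F).aestronglyMeasurable ?_
  filter_upwards with ω
  rw [Real.norm_eq_abs, Real.abs_exp]
  apply Real.exp_le_exp.mpr
  calc θ * ∑ k ∈ F, Y k ω ≤ |θ * ∑ k ∈ F, Y k ω| := le_abs_self _
  _ = |θ| * |∑ k ∈ F, Y k ω| := abs_mul _ _
  _ = |θ| * ∑ k ∈ F, Y k ω := by rw [abs_of_nonneg (sum_Y_nonneg hY F ω)]
  _ ≤ |θ| * F.card := mul_le_mul_of_nonneg_left (sum_Y_le hY F ω) (abs_nonneg θ)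

lemma integral_exp_pos (θ : ℝ) (F : Finset ℕ) :
    0 < ∫ ω, Real.exp (θ * ∑ k ∈ F, Y k ω) ∂mu0 := by
  have h : ∀ ω, Real.exp (-(|θ| * F.card)) ≤ Real.exp (θ * ∑ k ∈ F, Y k ω) := by
    intro ω
    apply Real.exp_le_exp.mpr
    have h1 : |θ * ∑ k ∈ F, Y k ω| ≤ |θ| * F.card := by
      rw [abs_mul, abs_of_nonneg (sum_Y_nonneg hY F ω)]
      exact mul_le_mul_of_nonneg_left (sum_Y_le hY F ω) (abs_nonneg θ)
    linarith [neg_abs_le (θ * ∑ k ∈ F, Y k ω)]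
  have h2 := integral_mono (integrable_const _) (integrable_exp_sum hY θ F) h
  rw [integral_const] at h2
  simp only [measure_univ, probReal_univ, ENNReal.toReal_one, one_smul] at h2
  exact lt_of_lt_of_le (Real.exp_pos _) h2

lemma log_integral_le {θ : ℝ} (hθ : 0 ≤ θ) (F : Finset ℕ) :
    Real.log (∫ ω, Real.exp (θ * ∑ k ∈ F, Y k ω) ∂mu0) ≤ θ * F.card := by
  have hle : ∫ ω, Real.exp (θ * ∑ k ∈ F, Y k ω) ∂mu0 ≤ Real.exp (θ * F.card) := by
    have h2 := integral_mono (integrable_exp_sum hY θ F) (integrable_const _)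
      (fun ω => Real.exp_le_exp.mpr (mul_le_mul_of_nonneg_left (sum_Y_le hY F ω) hθ))
    rw [integral_const] at h2
    simpa only [measure_univ, probReal_univ, ENNReal.toReal_one, one_smul] using h2
  calc Real.log (∫ ω, Real.exp (θ * ∑ k ∈ F, Y k ω) ∂mu0)
      ≤ Real.log (Real.exp (θ * F.card)) := Real.log_le_log (integral_exp_pos hY θ F) hle
  _ = θ * F.card := Real.log_exp _

lemma log_integral_ge_of_nonpos {θ : ℝ} (hθ : θ ≤ 0) (F : Finset ℕ) :
    θ * F.card ≤ Real.log (∫ ω, Real.exp (θ * ∑ k ∈ F, Y k ω) ∂mu0) := by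
  have hge : Real.exp (θ * F.card) ≤ ∫ ω, Real.exp (θ * ∑ k ∈ F, Y k ω) ∂mu0 := by
    have h2 := integral_mono (integrable_const (Real.exp (θ * F.card))) (integrable_exp_sum hY θ F)
      (fun ω => Real.exp_le_exp.mpr (mul_le_mul_of_nonpos_left (sum_Y_le hY F ω) hθ))
    rw [integral_const] at h2
    simpa only [measure_univ, probReal_univ, ENNReal.toReal_one, one_smul] using h2
  calc θ * F.card = Real.log (Real.exp (θ * F.card)) := (Real.log_exp _).symm
  _ ≤ Real.log (∫ ω, Real.exp (θ * ∑ k ∈ F, Y k ω) ∂mu0) :=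
      Real.log_le_log (Real.exp_pos _) hge

lemma log_integral_ge {θ : ℝ} (hθ : 0 ≤ θ) (i' b₀ : ℕ) (F : Finset ℕ)
    (hm : b₀ < 2^(2*i'+3)) (hF : ∀ k ∈ F, k ≤ b₀ ∧ b₀ - k < 2^i')
    (hcard : F.card = 2^i') :
    θ * 2^i' - (2*i'+3) * Real.log 2 ≤
      Real.log (∫ ω, Real.exp (θ * ∑ k ∈ F, Y k ω) ∂mu0) := by
  set m := 2*i'+3 with hmdef
  set E := cyl m b₀ with hEdef
  have hEsub : E ⊆ Set.Ico 0 1 := cyl_subset_Ico _ _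
  have hEmeas : MeasurableSet E := measurableSet_Ico
  have h2m : (0:ℝ) < 2^m := by positivity
  have hvol : volume E = ENNReal.ofReal ((2:ℝ)⁻¹^m) := by
    rw [hEdef]
    unfold cyl
    rw [Real.volume_Ico]
    congr 1
    rw [inv_pow]
    field_simp
    ring
  have hSE : ∀ ω ∈ E, ((2:ℝ)^i') ≤ ∑ k ∈ F, Y k ω := by
    intro ω hω
    have hall : ∀ k ∈ F, Y k ω = 1 := by
      intro k hk
      rw [hY, Set.indicator_of_mem]
      exact crux (hF k hk).1 (hF k hk).2 hm hω
    rw [Finset.sum_congr rfl hall, Finset.sum_const, hcard]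
    simp
  have key : Real.exp (θ*2^i') * (2:ℝ)⁻¹^m ≤
      ∫ ω, Real.exp (θ * ∑ k ∈ F, Y k ω) ∂mu0 := by
    have h1 : ∫ ω in E, Real.exp (θ * ∑ k ∈ F, Y k ω) ∂mu0 ≤
        ∫ ω, Real.exp (θ * ∑ k ∈ F, Y k ω) ∂mu0 :=
      setIntegral_le_integral (integrable_exp_sum hY θ F)
        (ae_of_all _ fun ω => (Real.exp_pos _).le)
    have h2 : mu0.restrict E = volume.restrict E := by
      rw [mu0, Measure.restrict_restrict hEmeas, Set.inter_eq_self_of_subset_left hEsub]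
    have hint : IntegrableOn (fun ω => Real.exp (θ * ∑ k ∈ F, Y k ω)) E volume := by
      have h4 := (integrable_exp_sum hY θ F).restrict (s := E)
      rwa [h2] at h4
    have h3 : Real.exp (θ*2^i') * (volume E).toReal ≤
        ∫ ω in E, Real.exp (θ * ∑ k ∈ F, Y k ω) := by
      apply setIntegral_ge_of_const_le_real hEmeas (by rw [hvol]; exact ENNReal.ofReal_ne_top)
      · intro x hx
        exact Real.exp_le_exp.mpr (mul_le_mul_of_nonneg_left (hSE x hx) hθ)
      · exact hint
    have h5 : (volume E).toReal = (2:ℝ)⁻¹^m := by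
      rw [hvol, ENNReal.toReal_ofReal (by positivity)]
    rw [h5] at h3
    calc Real.exp (θ*2^i') * (2:ℝ)⁻¹^m ≤ ∫ ω in E, Real.exp (θ * ∑ k ∈ F, Y k ω) := h3
    _ = ∫ ω in E, Real.exp (θ * ∑ k ∈ F, Y k ω) ∂mu0 := by rw [h2]
    _ ≤ _ := h1
  calc θ * 2^i' - (2*i'+3) * Real.log 2
      = Real.log (Real.exp (θ*2^i') * (2:ℝ)⁻¹^m) := by
        rw [Real.log_mul (Real.exp_ne_zero _) (by positivity), Real.log_exp,
          Real.log_pow, Real.log_inv]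
        rw [hmdef]
        push_cast
        ring
  _ ≤ Real.log (∫ ω, Real.exp (θ * ∑ k ∈ F, Y k ω) ∂mu0) :=
      Real.log_le_log (by positivity) key

lemma log_integral_le_abs (θ : ℝ) (F : Finset ℕ) :
    Real.log (∫ ω, Real.exp (θ * ∑ k ∈ F, Y k ω) ∂mu0) ≤ |θ| * F.card := by
  have hle : ∫ ω, Real.exp (θ * ∑ k ∈ F, Y k ω) ∂mu0 ≤ Real.exp (|θ| * F.card) := by
    have hpt : ∀ ω, Real.exp (θ * ∑ k ∈ F, Y k ω) ≤ Real.exp (|θ| * F.card) := by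
      intro ω
      apply Real.exp_le_exp.mpr
      calc θ * ∑ k ∈ F, Y k ω ≤ |θ * ∑ k ∈ F, Y k ω| := le_abs_self _
      _ = |θ| * |∑ k ∈ F, Y k ω| := abs_mul _ _
      _ = |θ| * ∑ k ∈ F, Y k ω := by rw [abs_of_nonneg (sum_Y_nonneg hY F ω)]
      _ ≤ |θ| * F.card := mul_le_mul_of_nonneg_left (sum_Y_le hY F ω) (abs_nonneg θ)
    have h2 := integral_mono (integrable_exp_sum hY θ F) (integrable_const _) hpt
    rw [integral_const] at h2
    simpa only [measure_univ, probReal_univ, ENNReal.toReal_one, one_smul] using h2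
  calc Real.log (∫ ω, Real.exp (θ * ∑ k ∈ F, Y k ω) ∂mu0)
      ≤ Real.log (Real.exp (|θ| * F.card)) := Real.log_le_log (integral_exp_pos hY θ F) hle
  _ = |θ| * F.card := Real.log_exp _

end YLemmas

lemma tendsto_c : Tendsto (fun i : ℕ => (2*(i:ℝ)+3) * Real.log 2 / 2^i) atTop (nhds 0) := by
  have h1 : Tendsto (fun i : ℕ => ((i:ℝ))^1 / 2^i) atTop (nhds 0) :=
    tendsto_pow_const_div_const_pow_of_one_lt 1 one_lt_two
  have h2 : Tendsto (fun i : ℕ => ((1:ℝ)/2)^i) atTop (nhds 0) :=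
    tendsto_pow_atTop_nhds_zero_of_lt_one (by norm_num) (by norm_num)
  have h3 := (h1.const_mul (2*Real.log 2)).add (h2.const_mul (3*Real.log 2))
  simp only [mul_zero, add_zero] at h3
  apply h3.congr
  intro i
  have hp : ((1:ℝ)/2)^i = 1/2^i := by rw [div_pow, one_pow]
  rw [hp]
  have h2i : ((2:ℝ)^i) ≠ 0 := by positivity
  field_simp

lemma hFrange (i' : ℕ) : ∀ k ∈ Finset.range (2^i'), k ≤ 2^i' - 1 ∧ (2^i' - 1) - k < 2^i' := by
  intro k hk
  rw [Finset.mem_range] at hk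
  have := Nat.one_le_two_pow (n := i')
  omega

lemma hFicc (i' : ℕ) : ∀ k ∈ Finset.Icc 1 (2^i'), k ≤ 2^i' ∧ 2^i' - k < 2^i' := by
  intro k hk
  rw [Finset.mem_Icc] at hk
  have := Nat.one_le_two_pow (n := i')
  omega

lemma hb_lt (i' b₀ : ℕ) (h : b₀ ≤ 2^i') : b₀ < 2^(2*i'+3) := by
  calc b₀ ≤ 2^i' := h
  _ < 2^(2*i'+3) := Nat.pow_lt_pow_right one_lt_two (by omega)

end Stmt18Aux

open Stmt18Aux

/-- For the process `Y n ω = 1_C(T^n ω)` built from the binary odometer, the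
cumulant limit along `n_i = 2^{i-1}` equals `θ` for every `θ > 0`; hence the
set `{θ : λ(θ) - θ·1 < 0}` is empty (service rate `s = 1`), where
`λ(θ) = limsup_n (1/n) log E[exp(θ ∑_{k=1}^n Y_k)]`. -/
theorem stmt_18 (Y : ℕ → ℝ → ℝ)
    (hY : ∀ n ω, Y n ω = Set.indicator CsetAll (fun _ => (1 : ℝ)) (TOdo^[n] ω)) :
    (∀ θ : ℝ, 0 < θ →
      Tendsto (fun i : ℕ => (1 / ((2 ^ (i - 1) : ℕ) : ℝ)) *
        Real.log (∫ ω, Real.exp (θ * ∑ j ∈ Finset.range (2 ^ (i - 1)), Y j ω)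
          ∂(volume.restrict (Set.Ico (0 : ℝ) 1)))) atTop (nhds θ)) ∧
    {θ : ℝ | Filter.limsup (fun n : ℕ => (1 / (n : ℝ)) *
        Real.log (∫ ω, Real.exp (θ * ∑ k ∈ Finset.Icc 1 n, Y k ω)
          ∂(volume.restrict (Set.Ico (0 : ℝ) 1)))) atTop - θ * 1 < 0} = ∅ := by
  have hmu : (volume.restrict (Set.Ico (0 : ℝ) 1)) = mu0 := rfl
  constructor
  · -- Part 1
    intro θ hθ
    have hlow : Tendsto (fun i : ℕ => θ - (2*((i-1 : ℕ):ℝ)+3) * Real.log 2 / 2^(i-1)) atTop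
        (nhds θ) := by
      have h1 := tendsto_c.comp (tendsto_sub_atTop_nat 1)
      have h2 := h1.const_sub θ
      simp only [Function.comp, sub_zero] at h2
      exact h2
    apply tendsto_of_tendsto_of_tendsto_of_le_of_le' hlow tendsto_const_nhds
    · -- lower bound
      filter_upwards with i
      have hlog := log_integral_ge hY hθ.le (i-1) (2^(i-1)-1) (Finset.range (2^(i-1)))
        (hb_lt _ _ (Nat.sub_le _ _)) (hFrange _) (by simp)
      rw [hmu]
      have hcast : ((2^(i-1):ℕ):ℝ) = 2^(i-1) := by push_cast; rfl
      rw [hcast]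
      have hpos : (0:ℝ) < 2^(i-1) := by positivity
      have heq : θ - (2*((i-1:ℕ):ℝ)+3) * Real.log 2 / 2^(i-1)
          = (1/2^(i-1)) * (θ*2^(i-1) - (2*((i-1:ℕ):ℝ)+3)*Real.log 2) := by
        field_simp
      rw [heq]
      exact mul_le_mul_of_nonneg_left hlog (by positivity)
    · -- upper bound
      filter_upwards with i
      have hlog := log_integral_le hY hθ.le (Finset.range (2^(i-1)))
      rw [Finset.card_range] at hlog
      rw [hmu]
      have hcast : ((2^(i-1):ℕ):ℝ) = 2^(i-1) := by push_cast; rfl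
      rw [hcast] at hlog ⊢
      have hpos : (0:ℝ) < 2^(i-1) := by positivity
      calc (1/(2:ℝ)^(i-1)) * Real.log (∫ ω, Real.exp (θ * ∑ j ∈ Finset.range (2^(i-1)), Y j ω) ∂mu0)
          ≤ (1/(2:ℝ)^(i-1)) * (θ * 2^(i-1)) :=
            mul_le_mul_of_nonneg_left hlog (by positivity)
      _ = θ := by field_simp
  · -- Part 2
    ext θ
    simp only [Set.mem_setOf_eq, Set.mem_empty_iff_false, iff_false, not_lt, mul_one]
    set u2 : ℕ → ℝ := fun n : ℕ => (1 / (n : ℝ)) *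
        Real.log (∫ ω, Real.exp (θ * ∑ k ∈ Finset.Icc 1 n, Y k ω)
          ∂(volume.restrict (Set.Ico (0 : ℝ) 1))) with hu2
    suffices h : θ ≤ Filter.limsup u2 atTop by linarith
    have hbdd : IsBoundedUnder (· ≤ ·) atTop u2 := by
      refine isBoundedUnder_of ⟨|θ|, fun n => ?_⟩
      rcases Nat.eq_zero_or_pos n with rfl | hn
      · simp [hu2, abs_nonneg]
      · have hlog := log_integral_le_abs hY θ (Finset.Icc 1 n)
        rw [Nat.card_Icc] at hlog
        simp only [Nat.add_sub_cancel] at hlog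
        have hpos : (0:ℝ) < n := by exact_mod_cast hn
        rw [hu2, hmu]
        calc (1/(n:ℝ)) * Real.log (∫ ω, Real.exp (θ * ∑ k ∈ Finset.Icc 1 n, Y k ω) ∂mu0)
            ≤ (1/(n:ℝ)) * (|θ| * n) := mul_le_mul_of_nonneg_left hlog (by positivity)
        _ = |θ| := by field_simp
    rcases le_or_gt θ 0 with hθ | hθ
    · -- nonpositive case
      apply le_limsup_of_frequently_le ?_ hbdd
      apply Filter.Eventually.frequently
      filter_upwards [eventually_ge_atTop 1] with n hn
      have hlog := log_integral_ge_of_nonpos hY hθ (Finset.Icc 1 n)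
      rw [Nat.card_Icc] at hlog
      simp only [Nat.add_sub_cancel] at hlog
      have hpos : (0:ℝ) < n := by exact_mod_cast hn
      rw [hu2, hmu]
      calc θ = (1/(n:ℝ)) * (θ * n) := by field_simp
      _ ≤ (1/(n:ℝ)) * Real.log (∫ ω, Real.exp (θ * ∑ k ∈ Finset.Icc 1 n, Y k ω) ∂mu0) :=
          mul_le_mul_of_nonneg_left hlog (by positivity)
    · -- positive case
      have key : ∀ ε : ℝ, 0 < ε → θ - ε ≤ Filter.limsup u2 atTop := by
        intro ε hε
        apply le_limsup_of_frequently_le ?_ hbdd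
        have hev : ∀ᶠ i : ℕ in atTop, (2*(i:ℝ)+3) * Real.log 2 / 2^i < ε := by
          have := tendsto_c.eventually_lt_const hε
          exact this
        have hev2 : ∀ᶠ i : ℕ in atTop, θ - ε ≤ u2 (2^i) := by
          filter_upwards [hev] with i hi
          have hlog := log_integral_ge hY hθ.le i (2^i) (Finset.Icc 1 (2^i))
            (hb_lt _ _ le_rfl) (hFicc _) (by simp [Nat.card_Icc])
          have hcast : ((2^i:ℕ):ℝ) = 2^i := by push_cast; rfl
          have hpos : (0:ℝ) < 2^i := by positivity
          rw [hu2, hmu]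
          simp only [hcast]
          calc θ - ε ≤ θ - (2*(i:ℝ)+3) * Real.log 2 / 2^i := by linarith
          _ = (1/(2:ℝ)^i) * (θ*2^i - (2*(i:ℝ)+3)*Real.log 2) := by field_simp
          _ ≤ (1/(2:ℝ)^i) * Real.log (∫ ω, Real.exp (θ * ∑ k ∈ Finset.Icc 1 (2^i), Y k ω) ∂mu0) :=
              mul_le_mul_of_nonneg_left hlog (by positivity)
        have hpow : Tendsto (fun i : ℕ => 2^i) atTop atTop :=
          tendsto_pow_atTop_atTop_of_one_lt one_lt_two
        exact hpow.frequently hev2.frequently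
      by_contra hcon
      push_neg at hcon
      have := key ((θ - Filter.limsup u2 atTop)/2) (by linarith)
      linarith
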